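/- The function Δ ↦ arcosh(√(1 + (1/3)·sinh(Δ)²)·cosh(Δ))/Δ tends to 2 as Δ → ∞. -/

import Mathlib

/-- Inverse hyperbolic cosine: for `x ≥ 1`, `arcosh x` is the unique `y ≥ 0`
with `Real.cosh y = x`; defined by the standard formula `log (x + √(x² - 1))`. -/
noncomputable def Real.arcosh' (x : ℝ) : ℝ := Real.log (x + Real.sqrt (x ^ 2 - 1))

open Real Filter

lemma arcosh_bounds (Δ : ℝ) (hΔ : 1 ≤ Δ) :
    2 - Real.log 16 / Δ ≤
      Real.arcosh' (Real.sqrt (1 + (1 / 3) * Real.sinh Δ ^ 2) * Real.cosh Δ) / Δ ∧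
      Real.arcosh' (Real.sqrt (1 + (1 / 3) * Real.sinh Δ ^ 2) * Real.cosh Δ) / Δ ≤
      2 + Real.log 2 / Δ := by
  have hΔ0 : (0:ℝ) < Δ := lt_of_lt_of_le one_pos hΔ
  set g : ℝ := Real.sqrt (1 + (1 / 3) * Real.sinh Δ ^ 2) * Real.cosh Δ with hg
  have hsinh0 : 0 < Real.sinh Δ := Real.sinh_pos_iff.2 hΔ0
  have hcosh1 : 1 ≤ Real.cosh Δ := Real.one_le_cosh Δ
  have hcoshpos : 0 < Real.cosh Δ := lt_of_lt_of_le one_pos hcosh1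
  have hg1 : 1 ≤ g := by
    have h1 : (1:ℝ) ≤ Real.sqrt (1 + (1 / 3) * Real.sinh Δ ^ 2) := by
      nlinarith [Real.sq_sqrt (show (0:ℝ) ≤ 1 + (1 / 3) * Real.sinh Δ ^ 2 by positivity),
        Real.sqrt_nonneg (1 + (1 / 3) * Real.sinh Δ ^ 2), sq_nonneg (Real.sinh Δ)]
    nlinarith
  have hgpos : 0 < g := lt_of_lt_of_le one_pos hg1
  -- lower bound on g
  have hsinhlb : Real.exp Δ / 4 ≤ Real.sinh Δ := by
    rw [Real.sinh_eq]
    have h1 : Real.exp (-Δ) ≤ Real.exp Δ / 2 := by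
      have : Real.exp (-Δ) ≤ 1 := Real.exp_le_one_iff.2 (by linarith)
      have : (2:ℝ) ≤ Real.exp Δ := by
        have := Real.add_one_le_exp Δ; linarith
      nlinarith [Real.exp_pos (-Δ)]
    linarith
  have hcoshlb : Real.exp Δ / 2 ≤ Real.cosh Δ := by
    rw [Real.cosh_eq]
    have := Real.exp_pos (-Δ); linarith
  have hglb : Real.exp (2 * Δ) / 16 ≤ g := by
    have h1 : Real.sinh Δ / 2 ≤ Real.sqrt (1 + (1 / 3) * Real.sinh Δ ^ 2) := by
      rw [show Real.sinh Δ / 2 = Real.sqrt ((Real.sinh Δ / 2) ^ 2) by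
        rw [Real.sqrt_sq (by positivity)]]
      apply Real.sqrt_le_sqrt
      nlinarith [sq_nonneg (Real.sinh Δ)]
    have h2 : Real.sinh Δ / 2 * Real.cosh Δ ≤ g := by
      have := mul_le_mul_of_nonneg_right h1 (le_of_lt hcoshpos)
      linarith
    have h3 : Real.exp (2 * Δ) / 16 ≤ Real.sinh Δ / 2 * Real.cosh Δ := by
      have := mul_le_mul hsinhlb hcoshlb (by positivity) (le_of_lt hsinh0)
      rw [show (2:ℝ) * Δ = Δ + Δ by ring, Real.exp_add]
      nlinarith
    linarith
  -- upper bound on g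
  have hgub : g ≤ Real.exp (2 * Δ) := by
    have h1 : Real.sqrt (1 + (1 / 3) * Real.sinh Δ ^ 2) ≤ Real.cosh Δ := by
      rw [show Real.cosh Δ = Real.sqrt (Real.cosh Δ ^ 2) by
        rw [Real.sqrt_sq (le_of_lt hcoshpos)]]
      apply Real.sqrt_le_sqrt
      rw [Real.cosh_sq']
      nlinarith [sq_nonneg (Real.sinh Δ)]
    have h2 : g ≤ Real.cosh Δ ^ 2 := by
      have := mul_le_mul_of_nonneg_right h1 (le_of_lt hcoshpos)
      nlinarith
    have h3 : Real.cosh Δ ≤ Real.exp Δ := by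
      rw [Real.cosh_eq]
      have h4 : Real.exp (-Δ) ≤ Real.exp Δ := Real.exp_le_exp.2 (by linarith)
      linarith
    calc g ≤ Real.cosh Δ ^ 2 := h2
      _ ≤ Real.exp Δ ^ 2 := by nlinarith
      _ = Real.exp (2 * Δ) := by rw [← Real.exp_nat_mul]; norm_num
  -- bounds on arcosh g
  have hsqle : Real.sqrt (g ^ 2 - 1) ≤ g := by
    have h := Real.sqrt_le_sqrt (show g ^ 2 - 1 ≤ g ^ 2 by linarith)
    rwa [Real.sqrt_sq (le_of_lt hgpos)] at h
  have hlow : 2 * Δ - Real.log 16 ≤ Real.arcosh' g := by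
    have h1 : Real.log g ≤ Real.arcosh' g := by
      unfold Real.arcosh'
      apply Real.log_le_log hgpos
      have := Real.sqrt_nonneg (g ^ 2 - 1); linarith
    have h2 : 2 * Δ - Real.log 16 ≤ Real.log g := by
      have := Real.log_le_log (by positivity) hglb
      rw [Real.log_div (by positivity) (by norm_num), Real.log_exp] at this
      linarith
    linarith
  have hhigh : Real.arcosh' g ≤ 2 * Δ + Real.log 2 := by
    have h1 : Real.arcosh' g ≤ Real.log (2 * g) := by
      unfold Real.arcosh'
      apply Real.log_le_log (by positivity)
      linarith
    have h2 : Real.log (2 * g) ≤ 2 * Δ + Real.log 2 := by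
      have := Real.log_le_log (by positivity) (mul_le_mul_of_nonneg_left hgub (by norm_num : (0:ℝ) ≤ 2))
      rw [Real.log_mul (by norm_num) (ne_of_gt (Real.exp_pos _)), Real.log_exp] at this
      linarith
    linarith
  constructor
  · have h := (div_le_div_iff_of_pos_right hΔ0).2 hlow
    rwa [sub_div, mul_div_assoc, div_self (ne_of_gt hΔ0), mul_one] at h
  · have h := (div_le_div_iff_of_pos_right hΔ0).2 hhigh
    rwa [add_div, mul_div_assoc, div_self (ne_of_gt hΔ0), mul_one] at h

theorem stmt_8 :
    Filter.Tendsto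
      (fun Δ : ℝ =>
        Real.arcosh' (Real.sqrt (1 + (1 / 3) * Real.sinh Δ ^ 2) * Real.cosh Δ) / Δ)
      Filter.atTop (nhds 2) := by
  have hlo : Filter.Tendsto (fun Δ : ℝ => 2 - Real.log 16 / Δ) Filter.atTop (nhds 2) := by
    have : Filter.Tendsto (fun Δ : ℝ => Real.log 16 / Δ) Filter.atTop (nhds 0) :=
      Filter.Tendsto.div_atTop tendsto_const_nhds tendsto_id
    simpa using tendsto_const_nhds.sub this
  have hhi : Filter.Tendsto (fun Δ : ℝ => 2 + Real.log 2 / Δ) Filter.atTop (nhds 2) := by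
    have : Filter.Tendsto (fun Δ : ℝ => Real.log 2 / Δ) Filter.atTop (nhds 0) :=
      Filter.Tendsto.div_atTop tendsto_const_nhds tendsto_id
    simpa using tendsto_const_nhds.add this
  apply tendsto_of_tendsto_of_tendsto_of_le_of_le' hlo hhi
  · filter_upwards [Filter.eventually_ge_atTop (1:ℝ)] with Δ hΔ
    exact (arcosh_bounds Δ hΔ).1
  · filter_upwards [Filter.eventually_ge_atTop (1:ℝ)] with Δ hΔ
    exact (arcosh_bounds Δ hΔ).2
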